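/- For all positive integers n and k and every integer m ≥ 0, the polynomials q_m satisfy the three-term recurrence q_{m+1}(y) = (y − 2m(k − m − n/2) − (n/2)(k − 1))·q_m(y) − m(m − k)(m − 1 + n/2)(m − 1 + n/2 − k)·q_{m−1}(y), where q_{−1}(y) := 0 (and q_0(y) = 1). -/
import Mathlib


/-- Pochhammer symbol `(a)_l = a(a+1)⋯(a+l-1)`, with `(a)_0 = 1`. -/
noncomputable def poch (a : ℝ) (l : ℕ) : ℝ := ∏ i ∈ Finset.range l, (a + i)

/-- The polynomial `q_m(y) = Σ_{l=0}^m (−1)^{m−l} (n/2+l)_{m−l} (k−m)_{m−l} C(m,l)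
Π_{j=1}^l (y − j(j−1))`. -/
noncomputable def qq (n k m : ℕ) (y : ℝ) : ℝ :=
  ∑ l ∈ Finset.range (m + 1),
    (-1 : ℝ) ^ (m - l) * poch ((n : ℝ) / 2 + l) (m - l) * poch ((k : ℝ) - m) (m - l)
      * (m.choose l) * ∏ j ∈ Finset.range l, (y - ((j : ℝ) + 1) * (j : ℝ))

noncomputable def cc (A K : ℝ) (m l : ℕ) : ℝ :=
  (-1 : ℝ) ^ (m - l) * poch (A + l) (m - l) * poch (K - m) (m - l) * (m.choose l)

noncomputable def PP (y : ℝ) (l : ℕ) : ℝ := ∏ j ∈ Finset.range l, (y - ((j : ℝ) + 1) * (j : ℝ))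

lemma qq_cc (n k m : ℕ) (y : ℝ) :
    qq n k m y = ∑ l ∈ Finset.range (m + 1), cc ((n : ℝ)/2) (k : ℝ) m l * PP y l := rfl

lemma poch_zero (x : ℝ) : poch x 0 = 1 := by simp [poch]

lemma poch_one (x : ℝ) : poch x 1 = x := by simp [poch]

lemma poch_succ (x : ℝ) (d : ℕ) : poch x (d+1) = poch x d * (x + d) := by
  simp [poch, Finset.prod_range_succ]

lemma poch_shift (x : ℝ) (d : ℕ) : poch x (d+1) = x * poch (x+1) d := by
  rw [poch, Finset.prod_range_succ', poch]
  simp only [Nat.cast_zero, add_zero, Nat.cast_add, Nat.cast_one]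
  rw [mul_comm]
  congr 1
  exact Finset.prod_congr rfl fun i _ => by ring

lemma poch_two (x : ℝ) (d : ℕ) : poch x (d+2) = poch x d * (x + d) * (x + d + 1) := by
  rw [poch_succ, poch_succ]; push_cast; ring

lemma poch_shift2 (x : ℝ) (d : ℕ) : poch x (d+2) = x * (x+1) * poch (x+2) d := by
  rw [poch_shift, poch_shift]; ring_nf

lemma poch_mixed (x : ℝ) (d : ℕ) : poch x (d+2) = x * poch (x+1) d * (x + 1 + d) := by
  rw [poch_shift, poch_succ]; ring

lemma cc_sub (A K : ℝ) (m l e : ℕ) (h : m - l = e) :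
    cc A K m l = (-1:ℝ)^e * poch (A + l) e * poch (K - m) e * (m.choose l) := by
  rw [cc, h]

lemma cc_self (A K : ℝ) (m : ℕ) : cc A K m m = 1 := by
  simp [cc, poch_zero]

lemma cc_zero (A K : ℝ) {m l : ℕ} (h : m < l) : cc A K m l = 0 := by
  simp [cc, Nat.choose_eq_zero_of_lt h]

lemma PP_succ (y : ℝ) (l : ℕ) : PP y (l+1) = PP y l * (y - ((l:ℝ)+1)*l) := by
  simp [PP, Finset.prod_range_succ]

-- nat binomial relations
lemma nat_r2 (l d : ℕ) : (l+d+1) * (l+d).choose l = (d+1) * (l+d+1).choose l := by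
  have h1 : (l+d).choose l = (l+d).choose d := by
    rw [← Nat.choose_symm (by omega : l ≤ l + d)]
    congr 1; omega
  have h2 : (l+d+1).choose l = (l+d+1).choose (d+1) := by
    rw [← Nat.choose_symm (by omega : l ≤ l + d + 1)]
    congr 1; omega
  rw [h1, h2]
  have h := Nat.add_one_mul_choose_eq (l+d) d
  simpa [Nat.succ_eq_add_one, mul_comm] using h

lemma nat_r1 (j d : ℕ) : (j+1) * (j+d+2).choose (j+1) = (d+2) * (j+d+2).choose j := by
  have := Nat.choose_succ_right_eq (j+d+2) j
  have hs : j + d + 2 - j = d + 2 := by omega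
  rw [hs] at this
  simpa [mul_comm] using this

lemma key (A K : ℝ) (t : ℕ) (B D : ℝ)
    (hB : B = 2*((t:ℝ)+1)*(K - ((t:ℝ)+1) - A) + A*(K-1))
    (hD : D = ((t:ℝ)+1)*(((t:ℝ)+1)-K)*((t:ℝ)+A)*((t:ℝ)+A-K)) (l : ℕ) (hl : l < t+3) :
    cc A K (t+2) l = (if l = 0 then 0 else cc A K (t+1) (l-1))
      + (((l:ℝ)+1)*l - B) * cc A K (t+1) l - D * cc A K t l := by
  by_cases h2 : l = t+2
  · subst h2
    rw [cc_self, cc_zero A K (by omega : t+1 < t+2), cc_zero A K (by omega : t < t+2),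
      if_neg (by omega : ¬ (t+2 = 0))]
    have e1 : t + 2 - 1 = t + 1 := rfl
    rw [e1, cc_self]
    ring
  by_cases h1 : l = t+1
  · subst h1
    rw [cc_sub A K (t+2) (t+1) 1 (by omega), cc_zero A K (by omega : t < t+1),
      if_neg (by omega : ¬ (t+1 = 0))]
    have e1 : t + 1 - 1 = t := rfl
    rw [e1, cc_sub A K (t+1) t 1 (by omega), cc_self]
    rw [poch_one, poch_one, poch_one, poch_one, Nat.choose_succ_self_right,
      Nat.choose_succ_self_right, hB, hD]
    push_cast
    ring
  -- now l ≤ t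
  have hlt : l ≤ t := by omega
  by_cases h0 : l = 0
  · subst h0
    rw [if_pos rfl, cc_sub A K (t+2) 0 (t+2) (by omega), cc_sub A K (t+1) 0 (t+1) (by omega),
      cc_sub A K t 0 t (by omega)]
    simp only [Nat.cast_zero, add_zero, Nat.choose_zero_right, Nat.cast_one, mul_one]
    rw [poch_two A t, poch_succ A t, poch_shift2 (K - ((t+2:ℕ):ℝ)) t,
      poch_shift (K - ((t+1:ℕ):ℝ)) t]
    have e2 : K - ((t+2:ℕ):ℝ) + 2 = K - (t:ℝ) := by push_cast; ring
    have e3 : K - ((t+1:ℕ):ℝ) + 1 = K - (t:ℝ) := by push_cast; ring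
    rw [e2, e3, hB, hD]
    push_cast
    ring
  · obtain ⟨j, rfl⟩ : ∃ j, l = j + 1 := ⟨l - 1, by omega⟩
    obtain ⟨d, rfl⟩ : ∃ d, t = j + 1 + d := ⟨t - (j+1), by omega⟩
    rw [if_neg (by omega : ¬ (j+1 = 0))]
    have e1 : j + 1 - 1 = j := rfl
    rw [e1, cc_sub A K (j+1+d+2) (j+1) (d+2) (by omega),
      cc_sub A K (j+1+d+1) j (d+2) (by omega),
      cc_sub A K (j+1+d+1) (j+1) (d+1) (by omega),
      cc_sub A K (j+1+d) (j+1) d (by omega)]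
    -- poch rewrites, A side
    rw [poch_two (A + ((j+1:ℕ):ℝ)) d, poch_mixed (A + ((j:ℕ):ℝ)) d,
      poch_succ (A + ((j+1:ℕ):ℝ)) d]
    have eA : A + ((j:ℕ):ℝ) + 1 = A + ((j+1:ℕ):ℝ) := by push_cast; ring
    rw [eA]
    -- poch rewrites, K side
    rw [poch_shift2 (K - ((j+1+d+2:ℕ):ℝ)) d, poch_mixed (K - ((j+1+d+1:ℕ):ℝ)) d,
      poch_shift (K - ((j+1+d+1:ℕ):ℝ)) d]
    have eK1 : K - ((j+1+d+2:ℕ):ℝ) + 2 = K - ((j+1+d:ℕ):ℝ) := by push_cast; ring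
    have eK2 : K - ((j+1+d+1:ℕ):ℝ) + 1 = K - ((j+1+d:ℕ):ℝ) := by push_cast; ring
    rw [eK1, eK2]
    -- binomial relations
    have HP : (((j+1+d+2).choose (j+1) : ℕ) : ℝ)
        = ((j+1+d+1).choose (j+1) : ℕ) + (((j+1+d+1).choose j : ℕ) : ℝ) := by
      have := Nat.choose_succ_succ (j+1+d+1) j
      push_cast [this]
      ring
    have HR2 : ((j:ℝ)+1+(d:ℝ)+1) * (((j+1+d).choose (j+1) : ℕ) : ℝ)
        = ((d:ℝ)+1) * (((j+1+d+1).choose (j+1) : ℕ) : ℝ) := by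
      have h := nat_r2 (j+1) d
      exact_mod_cast congrArg (Nat.cast : ℕ → ℝ) h
    have HR1 : ((j:ℝ)+1) * (((j+1+d+1).choose (j+1) : ℕ) : ℝ)
        = ((d:ℝ)+2) * (((j+1+d+1).choose j : ℕ) : ℝ) := by
      have h := nat_r1 j d
      have h' : j + 1 + d + 1 = j + d + 2 := by omega
      rw [h']
      exact_mod_cast congrArg (Nat.cast : ℕ → ℝ) h
    set u := poch (A + ((j+1:ℕ):ℝ)) d with hu
    set v := poch (K - ((j+1+d:ℕ):ℝ)) d with hv
    rw [hB, hD]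
    push_cast
    linear_combination ((-1:ℝ)^d * u * v * (A+(j:ℝ)+(d:ℝ)+1) * (K-(j:ℝ)-(d:ℝ)-2)) *
      ((A+(j:ℝ)+(d:ℝ)+2)*(K-(j:ℝ)-(d:ℝ)-3) * HP
        - ((j:ℝ)+(d:ℝ)+1+A-K) * HR2
        + ((2*(j:ℝ)+(d:ℝ)+3+A-K)) * HR1)

lemma sum_rec (A K y : ℝ) (t : ℕ) (B D : ℝ)
    (hB : B = 2*((t:ℝ)+1)*(K - ((t:ℝ)+1) - A) + A*(K-1))
    (hD : D = ((t:ℝ)+1)*(((t:ℝ)+1)-K)*((t:ℝ)+A)*((t:ℝ)+A-K)) :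
    ∑ l ∈ Finset.range (t+3), cc A K (t+2) l * PP y l
      = (y - B) * ∑ l ∈ Finset.range (t+2), cc A K (t+1) l * PP y l
        - D * ∑ l ∈ Finset.range (t+1), cc A K t l * PP y l := by
  have hterm : ∀ l ∈ Finset.range (t+3), cc A K (t+2) l * PP y l
      = (if l = 0 then 0 else cc A K (t+1) (l-1) * PP y l)
        + (((l:ℝ)+1)*l - B) * (cc A K (t+1) l * PP y l)
        - D * (cc A K t l * PP y l) := by
    intro l hl
    rw [Finset.mem_range] at hl
    rw [key A K t B D hB hD l hl]
    by_cases h0 : l = 0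
    · subst h0; simp; ring
    · rw [if_neg h0, if_neg h0]; ring
  rw [Finset.sum_congr rfl hterm, Finset.sum_sub_distrib, Finset.sum_add_distrib]
  have hshift : (∑ l ∈ Finset.range (t+3), if l = 0 then 0 else cc A K (t+1) (l-1) * PP y l)
      = ∑ l ∈ Finset.range (t+2), cc A K (t+1) l * PP y (l+1) := by
    rw [Finset.sum_range_succ']
    simp
  have hmid : (∑ l ∈ Finset.range (t+3), (((l:ℝ)+1)*l - B) * (cc A K (t+1) l * PP y l))
      = ∑ l ∈ Finset.range (t+2), (((l:ℝ)+1)*l - B) * (cc A K (t+1) l * PP y l) := by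
    rw [Finset.sum_range_succ, cc_zero A K (by omega : t+1 < t+2)]
    simp
  have hlast : (∑ l ∈ Finset.range (t+3), D * (cc A K t l * PP y l))
      = D * ∑ l ∈ Finset.range (t+1), cc A K t l * PP y l := by
    rw [Finset.sum_range_succ, Finset.sum_range_succ, cc_zero A K (by omega : t < t+1),
      cc_zero A K (by omega : t < t+2), Finset.mul_sum]
    simp
  rw [hshift, hmid, hlast]
  have hcomb : (∑ l ∈ Finset.range (t+2), cc A K (t+1) l * PP y (l+1))
      + ∑ l ∈ Finset.range (t+2), (((l:ℝ)+1)*l - B) * (cc A K (t+1) l * PP y l)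
      = (y - B) * ∑ l ∈ Finset.range (t+2), cc A K (t+1) l * PP y l := by
    rw [← Finset.sum_add_distrib, Finset.mul_sum]
    refine Finset.sum_congr rfl fun l _ => ?_
    rw [PP_succ]
    ring
  rw [hcomb]


/-- The three-term recurrence for `q_m`, with `q_{-1} := 0`. -/
theorem stmt1 (n k : ℕ) (hn : 0 < n) (hk : 0 < k) (m : ℕ) (y : ℝ) :
    qq n k (m + 1) y
      = (y - 2 * (m : ℝ) * ((k : ℝ) - m - (n : ℝ) / 2) - (n : ℝ) / 2 * ((k : ℝ) - 1))
          * qq n k m y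
        - (m : ℝ) * ((m : ℝ) - k) * ((m : ℝ) - 1 + (n : ℝ) / 2) * ((m : ℝ) - 1 + (n : ℝ) / 2 - k)
            * (if m = 0 then 0 else qq n k (m - 1) y) := by
  obtain _ | t := m
  · norm_num [qq, poch, Finset.sum_range_succ, Finset.prod_range_succ]
    ring
  · rw [if_neg (by omega : ¬ (t + 1 = 0))]
    have e1 : t + 1 - 1 = t := rfl
    rw [e1, qq_cc, qq_cc, qq_cc]
    have h := sum_rec ((n:ℝ)/2) (k:ℝ) y t _ _ rfl rfl
    refine h.trans ?_
    push_cast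
    ring
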